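/- Let T be a dynamic attack tree with durations d, and let M = 1 + Σ_{a ∈ BAS} d_a. Then there exists a time assignment f minimizing f at the root over all time assignments such that f_v ∈ [0, M−1] ∪ {∞} for all nodes v. -/

import Mathlib

open scoped ENNReal

/-- A dynamic attack tree: leaves are basic attack steps (BAS), internal
nodes are OR / AND / SAND gates with a list of children (ordered, which
matters for SAND).  DAG-sharing is modelled by shared BAS labels /
shared subterms. -/
inductive DAT (α : Type) : Type
  | bas (a : α) : DAT α
  | or (cs : List (DAT α)) : DAT α
  | and (cs : List (DAT α)) : DAT α
  | sand (cs : List (DAT α)) : DAT α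

namespace DAT

variable {α : Type}

/-- `IsBasDesc v a` : the BAS `a` is a descendant of node `v` (i.e. `a ∈ B_v`). -/
inductive IsBasDesc : DAT α → α → Prop
  | bas (a : α) : IsBasDesc (.bas a) a
  | or {cs : List (DAT α)} {c : DAT α} {a : α} : c ∈ cs → IsBasDesc c a → IsBasDesc (.or cs) a
  | and {cs : List (DAT α)} {c : DAT α} {a : α} : c ∈ cs → IsBasDesc c a → IsBasDesc (.and cs) a
  | sand {cs : List (DAT α)} {c : DAT α} {a : α} : c ∈ cs → IsBasDesc c a → IsBasDesc (.sand cs) a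

/-- `Subnode v T` : `v` is a node of the DAT `T` (a subterm). -/
inductive Subnode : DAT α → DAT α → Prop
  | refl (t : DAT α) : Subnode t t
  | or {v c : DAT α} {cs : List (DAT α)} : c ∈ cs → Subnode v c → Subnode v (.or cs)
  | and {v c : DAT α} {cs : List (DAT α)} : c ∈ cs → Subnode v c → Subnode v (.and cs)
  | sand {v c : DAT α} {cs : List (DAT α)} : c ∈ cs → Subnode v c → Subnode v (.sand cs)

/-- `Reaches A r v` : the attack given by the set `A` of activated BASes and
the strict order `r` on them reaches node `v`. -/
inductive Reaches (A : Set α) (r : α → α → Prop) : DAT α → Prop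
  | bas {a : α} : a ∈ A → Reaches A r (.bas a)
  | or {cs : List (DAT α)} {c : DAT α} : c ∈ cs → Reaches A r c → Reaches A r (.or cs)
  | and {cs : List (DAT α)} : (∀ c ∈ cs, Reaches A r c) → Reaches A r (.and cs)
  | sand {cs : List (DAT α)} :
      (∀ c ∈ cs, Reaches A r c) →
      (∀ i, (h : i + 1 < cs.length) → ∀ a a', a ∈ A → a' ∈ A →
        IsBasDesc (cs.get ⟨i, Nat.lt_of_succ_lt h⟩) a →
        IsBasDesc (cs.get ⟨i + 1, h⟩) a' → r a a') →
      Reaches A r (.sand cs)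

end DAT

/-- An attack: a finite set of BASes together with a strict partial order on it. -/
structure Attack (α : Type) where
  carrier : Finset α
  lt : α → α → Prop
  lt_mem : ∀ {a b : α}, lt a b → a ∈ carrier ∧ b ∈ carrier
  lt_irrefl : ∀ a, ¬ lt a a
  lt_trans : ∀ {a b c : α}, lt a b → lt b c → lt a c

namespace Attack

variable {α : Type}

/-- The order on attacks: inclusion of carriers and of order relations. -/
def le (O O' : Attack α) : Prop :=
  O.carrier ⊆ O'.carrier ∧ ∀ a b, O.lt a b → O'.lt a b

end Attack

namespace DAT

variable {α : Type}

/-- A maximal chain of the strict poset with carrier `A` and order `r`. -/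
def MaxChain (A : Set α) (r : α → α → Prop) (C : Finset α) : Prop :=
  ↑C ⊆ A ∧ IsChain r ↑C ∧
    ∀ C' : Finset α, ↑C' ⊆ A → IsChain r ↑C' → C ⊆ C' → C' = C

/-- Duration `t(O, d)` of an attack: the maximum over maximal chains of the
sum of the durations. -/
noncomputable def dur (A : Set α) (r : α → α → Prop) (d : α → ℝ≥0∞) : ℝ≥0∞ :=
  ⨆ C ∈ {C : Finset α | MaxChain A r C}, ∑ a ∈ C, d a

/-- An attack is successful on `T` if it reaches the root of `T`. -/
def Successful (O : Attack α) (T : DAT α) : Prop :=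
  Reaches (↑O.carrier) O.lt T

/-- Min time: the infimum of the durations of successful attacks (`∞` if there
are none). -/
noncomputable def mt (T : DAT α) (d : α → ℝ≥0∞) : ℝ≥0∞ :=
  ⨅ O ∈ {O : Attack α | Successful O T}, dur (↑O.carrier) O.lt d

end DAT

namespace DAT

variable {α : Type}

/-- The bottom-up algorithm MT-BU. -/
noncomputable def BU (d : α → ℝ≥0∞) : DAT α → ℝ≥0∞
  | .bas a => d a
  | .or cs => (cs.attach.map (fun c => BU d c.1)).foldr min ⊤
  | .and cs => (cs.attach.map (fun c => BU d c.1)).foldr max 0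
  | .sand cs => (cs.attach.map (fun c => BU d c.1)).sum
  decreasing_by all_goals (simp_wf; have := List.sizeOf_lt_of_mem c.2; omega)

/-- A static attack tree: no SAND gates. -/
inductive IsStatic : DAT α → Prop
  | bas (a : α) : IsStatic (.bas a)
  | or {cs : List (DAT α)} : (∀ c ∈ cs, IsStatic c) → IsStatic (.or cs)
  | and {cs : List (DAT α)} : (∀ c ∈ cs, IsStatic c) → IsStatic (.and cs)

/-- Reachability for a plain set of BASes (static semantics, no order needed). -/
inductive ReachSet (A : Set α) : DAT α → Prop
  | bas {a : α} : a ∈ A → ReachSet A (.bas a)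
  | or {cs : List (DAT α)} {c : DAT α} : c ∈ cs → ReachSet A c → ReachSet A (.or cs)
  | and {cs : List (DAT α)} : (∀ c ∈ cs, ReachSet A c) → ReachSet A (.and cs)

/-- List of the BAS labels occurring in a DAT, with multiplicity. -/
def basList : DAT α → List α
  | .bas a => [a]
  | .or cs => (cs.attach.map (fun c => basList c.1)).flatten
  | .and cs => (cs.attach.map (fun c => basList c.1)).flatten
  | .sand cs => (cs.attach.map (fun c => basList c.1)).flatten
  decreasing_by all_goals (simp_wf; have := List.sizeOf_lt_of_mem c.2; omega)

/-- The "bad" condition forcing a SAND node to `∞`: some child is not reached,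
or some pair of BASes of consecutive children violates the ordering constraint. -/
def SandBad (d : α → ℝ≥0∞) (f : DAT α → ℝ≥0∞) (cs : List (DAT α)) : Prop :=
  (∃ c ∈ cs, f c = ⊤) ∨
    ∃ i, ∃ h : i + 1 < cs.length, ∃ a a',
      IsBasDesc (cs.get ⟨i, Nat.lt_of_succ_lt h⟩) a ∧
      IsBasDesc (cs.get ⟨i + 1, h⟩) a' ∧
      f (.bas a') - d a' < f (.bas a) ∧ f (.bas a) < ⊤

/-- Local time-assignment constraints at a node. -/
def LocalTA (d : α → ℝ≥0∞) (f : DAT α → ℝ≥0∞) : DAT α → Prop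
  | .bas a => d a ≤ f (.bas a)
  | .or cs => (⨅ c ∈ cs, f c) ≤ f (.or cs)
  | .and cs => (⨆ c ∈ cs, f c) ≤ f (.and cs)
  | .sand cs =>
      (∀ c, cs.getLast? = some c → f c ≤ f (.sand cs)) ∧
      (SandBad d f cs → f (.sand cs) = ⊤)

/-- Local exact time-assignment constraints at a node. -/
def LocalExact (d : α → ℝ≥0∞) (f : DAT α → ℝ≥0∞) : DAT α → Prop
  | .bas a => d a ≤ f (.bas a)
  | .or cs => f (.or cs) = ⨅ c ∈ cs, f c
  | .and cs => f (.and cs) = ⨆ c ∈ cs, f c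
  | .sand cs =>
      (SandBad d f cs → f (.sand cs) = ⊤) ∧
      (¬ SandBad d f cs → ∀ c, cs.getLast? = some c → f (.sand cs) = f c)

/-- `f` is a time assignment for `T`. -/
def IsTA (d : α → ℝ≥0∞) (f : DAT α → ℝ≥0∞) (T : DAT α) : Prop :=
  ∀ v, Subnode v T → LocalTA d f v

/-- `f` is an exact time assignment for `T`. -/
def IsExactTA (d : α → ℝ≥0∞) (f : DAT α → ℝ≥0∞) (T : DAT α) : Prop :=
  ∀ v, Subnode v T → LocalExact d f v

end DAT

namespace DAT

variable {α : Type}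

theorem Subnode.trans' {u v w : DAT α} (h1 : Subnode u v) (h2 : Subnode v w) :
    Subnode u w := by
  induction h2 with
  | refl => exact h1
  | or hm _ ih => exact .or hm ih
  | and hm _ ih => exact .and hm ih
  | sand hm _ ih => exact .sand hm ih

theorem subnode_of_basDesc {v : DAT α} {a : α} (h : IsBasDesc v a) :
    Subnode (.bas a) v := by
  induction h with
  | bas a => exact .refl _
  | or hm _ ih => exact .or hm ih
  | and hm _ ih => exact .and hm ih
  | sand hm _ ih => exact .sand hm ih

theorem basDesc_of_subnode {v T : DAT α} {a : α} (h : Subnode v T) (hb : IsBasDesc v a) :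
    IsBasDesc T a := by
  induction h with
  | refl => exact hb
  | or hm _ ih => exact .or hm ih
  | and hm _ ih => exact .and hm ih
  | sand hm _ ih => exact .sand hm ih

theorem subnode_or {c : DAT α} {cs : List (DAT α)} (h : c ∈ cs) : Subnode c (.or cs) :=
  .or h (.refl c)
theorem subnode_and {c : DAT α} {cs : List (DAT α)} (h : c ∈ cs) : Subnode c (.and cs) :=
  .and h (.refl c)
theorem subnode_sand {c : DAT α} {cs : List (DAT α)} (h : c ∈ cs) : Subnode c (.sand cs) :=
  .sand h (.refl c)

/-- A strong induction principle for `DAT`. -/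
theorem strongInd {P : DAT α → Prop} (hbas : ∀ a, P (.bas a))
    (hor : ∀ cs, (∀ c ∈ cs, P c) → P (.or cs))
    (hand : ∀ cs, (∀ c ∈ cs, P c) → P (.and cs))
    (hsand : ∀ cs, (∀ c ∈ cs, P c) → P (.sand cs)) : ∀ v, P v
  | .bas a => hbas a
  | .or cs => hor cs (fun c hc => strongInd hbas hor hand hsand c)
  | .and cs => hand cs (fun c hc => strongInd hbas hor hand hsand c)
  | .sand cs => hsand cs (fun c hc => strongInd hbas hor hand hsand c)
  decreasing_by all_goals (simp_wf; have := List.sizeOf_lt_of_mem hc; omega)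

/-- The "bad pair" condition, in terms of a completion-time function on BASes. -/
def PairBad (d b : α → ℝ≥0∞) (cs : List (DAT α)) : Prop :=
  ∃ i, ∃ h : i + 1 < cs.length, ∃ a a',
    IsBasDesc (cs.get ⟨i, Nat.lt_of_succ_lt h⟩) a ∧
    IsBasDesc (cs.get ⟨i + 1, h⟩) a' ∧
    b a' - d a' < b a ∧ b a < ⊤

open scoped Classical in
/-- The canonical (exact) time assignment induced by BAS completion times `β`. -/
noncomputable def F (d β : α → ℝ≥0∞) : DAT α → ℝ≥0∞
  | .bas a => max (β a) (d a)
  | .or cs => ⨅ c : {x // x ∈ cs}, F d β c.1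
  | .and cs => ⨆ c : {x // x ∈ cs}, F d β c.1
  | .sand cs =>
      if (∃ c : {x // x ∈ cs}, F d β c.1 = ⊤) ∨ PairBad d (fun a => max (β a) (d a)) cs
      then ⊤
      else if h : cs = [] then 0 else F d β (cs.getLast h)
  decreasing_by
    all_goals (simp_wf; first
      | (have := List.sizeOf_lt_of_mem c.2; omega)
      | (have := List.sizeOf_lt_of_mem a.2; omega)
      | (have := List.sizeOf_lt_of_mem (List.getLast_mem h); omega))

theorem F_bas (d β : α → ℝ≥0∞) (a : α) : F d β (.bas a) = max (β a) (d a) := by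
  rw [F]

theorem F_or (d β : α → ℝ≥0∞) (cs : List (DAT α)) :
    F d β (.or cs) = ⨅ c ∈ cs, F d β c := by
  rw [F, iInf_subtype']

theorem F_and (d β : α → ℝ≥0∞) (cs : List (DAT α)) :
    F d β (.and cs) = ⨆ c ∈ cs, F d β c := by
  rw [F, iSup_subtype']

open scoped Classical in
theorem F_sand (d β : α → ℝ≥0∞) (cs : List (DAT α)) :
    F d β (.sand cs) =
      if SandBad d (F d β) cs then ⊤
      else if h : cs = [] then 0 else F d β (cs.getLast h) := by
  rw [F]
  congr 1
  · apply propext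
    constructor
    · rintro (⟨c, hc⟩ | hp)
      · exact Or.inl ⟨c.1, c.2, hc⟩
      · obtain ⟨i, h, a, a', h1, h2, h3, h4⟩ := hp
        exact Or.inr ⟨i, h, a, a', h1, h2, by simpa [F_bas] using h3, by simpa [F_bas] using h4⟩
    · rintro (⟨c, hc, hc'⟩ | hp)
      · exact Or.inl ⟨⟨c, hc⟩, hc'⟩
      · obtain ⟨i, h, a, a', h1, h2, h3, h4⟩ := hp
        exact Or.inr ⟨i, h, a, a', h1, h2, by simpa [F_bas] using h3, by simpa [F_bas] using h4⟩

end DAT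
namespace DAT

variable {α : Type}

theorem localTA_F (d β : α → ℝ≥0∞) (v : DAT α) : LocalTA d (F d β) v := by
  cases v with
  | bas a => simp [LocalTA, F_bas]
  | or cs => simp [LocalTA, F_or]
  | and cs => simp [LocalTA, F_and]
  | sand cs =>
    constructor
    · intro c hc
      rw [F_sand]
      split
      · exact le_top
      · have hne : cs ≠ [] := by rintro rfl; simp at hc
        rw [dif_neg hne]
        rw [List.getLast?_eq_getLast hne] at hc
        rw [← Option.some_inj.1 hc]
    · intro hbad
      rw [F_sand, if_pos hbad]

theorem isTA_F (d β : α → ℝ≥0∞) (T : DAT α) : IsTA d (F d β) T :=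
  fun v _ => localTA_F d β v

/-- minimality of the canonical assignment w.r.t. any time assignment. -/
theorem F_le_of_isTA {d : α → ℝ≥0∞} {g : DAT α → ℝ≥0∞} {T : DAT α}
    (hg : IsTA d g T) :
    ∀ v, Subnode v T → F d (fun a => g (.bas a)) v ≤ g v := by
  set β : α → ℝ≥0∞ := fun a => g (.bas a) with hβ
  have hbval : ∀ a, Subnode (.bas a) T → F d β (.bas a) = g (.bas a) := by
    intro a ha
    have := hg _ ha
    simp only [LocalTA] at this
    rw [F_bas]
    exact max_eq_left this
  refine strongInd ?_ ?_ ?_ ?_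
  · intro a ha
    rw [F_bas]
    exact max_le le_rfl ((hg _ ha : LocalTA d g (.bas a)))
  · intro cs ih hsub
    have := hg _ hsub
    simp only [LocalTA] at this
    refine le_trans ?_ this
    rw [F_or]
    exact iInf₂_mono fun c hc => ih c hc ((subnode_or hc).trans' hsub)
  · intro cs ih hsub
    have := hg _ hsub
    simp only [LocalTA] at this
    refine le_trans ?_ this
    rw [F_and]
    exact iSup₂_mono fun c hc => ih c hc ((subnode_and hc).trans' hsub)
  · intro cs ih hsub
    obtain ⟨hlast, hbad⟩ := hg _ hsub
    rw [F_sand]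
    split
    · next hb =>
      -- transfer badness to g
      refine le_of_eq (hbad ?_).symm
      rcases hb with ⟨c, hc, hct⟩ | ⟨i, h, a, a', h1, h2, h3, h4⟩
      · exact Or.inl ⟨c, hc, top_le_iff.1 (hct ▸ ih c hc ((subnode_sand hc).trans' hsub))⟩
      · have hga : Subnode (.bas a) T :=
          (subnode_of_basDesc h1).trans' (((subnode_sand (cs.get_mem _)).trans' hsub))
        have hga' : Subnode (.bas a') T :=
          (subnode_of_basDesc h2).trans' (((subnode_sand (cs.get_mem _)).trans' hsub))
        refine Or.inr ⟨i, h, a, a', h1, h2, ?_, ?_⟩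
        · rw [← hbval a hga, ← hbval a' hga']; exact h3
        · rw [← hbval a hga]; exact h4
    · next hb =>
      split
      · exact zero_le
      · next hne =>
        refine le_trans (ih _ (List.getLast_mem hne)
          ((subnode_sand (List.getLast_mem hne)).trans' hsub)) ?_
        exact hlast _ (List.getLast?_eq_getLast hne)

end DAT
namespace DAT

variable {α : Type}

/-- In `ℝ≥0∞`, a finset sup is either `0` or attained. -/
theorem fsup_attained {γ : Type*} (s : Finset γ) (f : γ → ℝ≥0∞) :
    s.sup f = 0 ∨ ∃ x ∈ s, s.sup f = f x := by
  rcases s.eq_empty_or_nonempty with rfl | hs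
  · simp
  · exact Or.inr (Finset.exists_mem_eq_sup s hs f)

open scoped Classical in
/-- The fuelled left-shift compression of a completion-time function `b`. -/
noncomputable def M (d : α → ℝ≥0∞) (B : Finset α) (b : α → ℝ≥0∞) : ℕ → ℝ≥0∞ → ℝ≥0∞
  | 0, _ => 0
  | n + 1, t => B.sup fun y =>
      if b y = t then
        d y ⊔ ((B.filter fun x => b x < t ∧ b x + d y ≤ t).sup fun x => M d B b n (b x) + d y)
      else 0

theorem M_le {d : α → ℝ≥0∞} {B : Finset α} {b : α → ℝ≥0∞}
    (hdb : ∀ y, d y ≤ b y) : ∀ n t, M d B b n t ≤ t := by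
  intro n
  induction n with
  | zero => intro t; simp [M]
  | succ n ih =>
    intro t
    rw [M]
    refine Finset.sup_le fun y _ => ?_
    split
    · next hy =>
      refine max_le (hy ▸ hdb y) (Finset.sup_le fun x hx => ?_)
      rw [Finset.mem_filter] at hx
      exact le_trans (add_le_add (ih (b x)) (le_refl (d y))) hx.2.2
    · exact zero_le

theorem M_stab {d : α → ℝ≥0∞} {B : Finset α} {b : α → ℝ≥0∞} :
    ∀ n m t, n ≤ m →
      (((B.filter fun a => b a ≠ ⊤).image b).filter (· < t)).card ≤ n →
      M d B b (n + 1) t = M d B b (m + 1) t := by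
  classical
  intro n
  induction n using Nat.strong_induction_on with
  | _ n ih =>
    intro m t hnm hcard
    rw [M, M]
    refine Finset.sup_congr rfl fun y _ => ?_
    split
    · next hy =>
      congr 1
      refine Finset.sup_congr rfl fun x hx => ?_
      rw [Finset.mem_filter] at hx
      obtain ⟨hxB, hxt, _⟩ := hx
      have hbxL : b x ∈ (B.filter fun a => b a ≠ ⊤).image b :=
        Finset.mem_image_of_mem b (Finset.mem_filter.2 ⟨hxB, (hxt.trans_le le_top).ne⟩)
      have hsub : (((B.filter fun a => b a ≠ ⊤).image b).filter (· < b x)) ⊆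
          (((B.filter fun a => b a ≠ ⊤).image b).filter (· < t)) := by
        intro z hz
        rw [Finset.mem_filter] at hz ⊢
        exact ⟨hz.1, hz.2.trans hxt⟩
      have hss := (Finset.ssubset_iff_of_subset hsub).2
        ⟨b x, Finset.mem_filter.2 ⟨hbxL, hxt⟩, by simp⟩
      have hlt : (((B.filter fun a => b a ≠ ⊤).image b).filter (· < b x)).card < n :=
        lt_of_lt_of_le (Finset.card_lt_card hss) hcard
      match n, m, hnm, hlt with
      | n' + 1, m' + 1, hnm, hlt =>
        exact congrArg (fun z => z + d y) (ih n' (by omega) m' (b x) (by omega) (by omega))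
    · rfl

theorem M_val {d : α → ℝ≥0∞} {B : Finset α} {b : α → ℝ≥0∞} :
    ∀ n t, ∃ s : Finset α, s ⊆ B ∧ (∀ a ∈ s, b a ≤ t) ∧
      M d B b n t = ∑ a ∈ s, d a := by
  classical
  intro n
  induction n with
  | zero => intro t; exact ⟨∅, by simp [M]⟩
  | succ n ih =>
    intro t
    rw [M]
    rcases fsup_attained B (fun y =>
        if b y = t then
          d y ⊔ ((B.filter fun x => b x < t ∧ b x + d y ≤ t).sup fun x => M d B b n (b x) + d y)
        else 0) with h0 | ⟨y, hyB, hy⟩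
    · exact ⟨∅, by simp [h0]⟩
    · rw [hy]
      split
      · next hyt =>
        rcases le_total ((B.filter fun x => b x < t ∧ b x + d y ≤ t).sup
            fun x => M d B b n (b x) + d y) (d y) with hle | hle
        · refine ⟨{y}, by simpa using hyB, by simp [hyt], ?_⟩
          simp [max_eq_left hle]
        · rw [max_eq_right hle]
          rcases fsup_attained (B.filter fun x => b x < t ∧ b x + d y ≤ t)
              (fun x => M d B b n (b x) + d y) with h0 | ⟨x, hx, hxe⟩
          · have hdy : d y = 0 := le_antisymm (h0 ▸ hle) (zero_le)
            exact ⟨∅, by simp, by simp, by rw [h0]; simp⟩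
          · rw [Finset.mem_filter] at hx
            obtain ⟨s, hsB, hst, hsum⟩ := ih (b x)
            have hys : y ∉ s := fun hys =>
              absurd (hyt ▸ (hst y hys)) (not_le.2 hx.2.1)
            refine ⟨insert y s, ?_, ?_, ?_⟩
            · exact Finset.insert_subset hyB hsB
            · intro a ha
              rcases Finset.mem_insert.1 ha with rfl | ha
              · exact le_of_eq hyt
              · exact (hst a ha).trans hx.2.1.le
            · rw [hxe, Finset.sum_insert hys, hsum, add_comm]
      · exact ⟨∅, by simp⟩

end DAT
namespace DAT

variable {α : Type}

open scoped Classical in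
/-- The compressed completion times. -/
noncomputable def compress (d : α → ℝ≥0∞) (B : Finset α) (b : α → ℝ≥0∞) (a : α) : ℝ≥0∞ :=
  if b a = ⊤ then ⊤ else M d B b (((B.filter fun x => b x ≠ ⊤).image b).card + 1) (b a)

theorem compress_le {d : α → ℝ≥0∞} {B : Finset α} {b : α → ℝ≥0∞}
    (hdb : ∀ y, d y ≤ b y) (a : α) : compress d B b a ≤ b a := by
  rw [compress]
  split
  · next h => exact le_of_eq h.symm
  · exact M_le hdb _ _

theorem compress_top {d : α → ℝ≥0∞} {B : Finset α} {b : α → ℝ≥0∞} {a : α}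
    (h : b a = ⊤) : compress d B b a = ⊤ := by
  rw [compress, if_pos h]

theorem le_compress {d : α → ℝ≥0∞} {B : Finset α} {b : α → ℝ≥0∞} {a : α}
    (haB : a ∈ B) : d a ≤ compress d B b a := by
  classical
  rw [compress]
  split
  · exact le_top
  · rw [M]
    refine le_trans ?_ (Finset.le_sup haB)
    rw [if_pos rfl]
    exact le_sup_left

theorem compress_mem {d : α → ℝ≥0∞} {B : Finset α} {b : α → ℝ≥0∞} {a : α}
    (haB : a ∈ B) :
    compress d B b a ∈ insert ⊤ (B.powerset.image fun s => ∑ x ∈ s, d x) := by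
  classical
  rw [compress]
  split
  · exact Finset.mem_insert_self _ _
  · obtain ⟨s, hsB, -, he⟩ := M_val (d := d) (B := B) (b := b)
      (((B.filter fun x => b x ≠ ⊤).image b).card + 1) (b a)
    exact Finset.mem_insert_of_mem
      (Finset.mem_image.2 ⟨s, Finset.mem_powerset.2 hsB, he.symm⟩)

theorem compress_add_le {d : α → ℝ≥0∞} {B : Finset α} {b : α → ℝ≥0∞}
    {x y : α} (hx : x ∈ B) (hy : y ∈ B) (hby : b y ≠ ⊤)
    (hxy : b x + d y ≤ b y) : compress d B b x + d y ≤ compress d B b y := by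
  classical
  have hbx : b x ≠ ⊤ := by
    intro h
    refine hby (top_le_iff.1 ?_)
    calc (⊤ : ℝ≥0∞) = b x := h.symm
      _ ≤ b x + d y := le_self_add
      _ ≤ b y := hxy
  by_cases he : b x = b y
  · have hdy : d y = 0 := by
      by_contra hdy
      have h2 : b x < b x + d y := ENNReal.lt_add_right hbx hdy
      have h3 : b x < b y := h2.trans_le hxy
      exact h3.ne he
    rw [hdy, add_zero, compress, compress, he]
  · have hlt : b x < b y := lt_of_le_of_ne (le_trans le_self_add hxy) he
    set L := (B.filter fun z => b z ≠ ⊤).image b with hL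
    have hbxL : b x ∈ L := Finset.mem_image_of_mem b (Finset.mem_filter.2 ⟨hx, hbx⟩)
    have hNpos : 0 < L.card := Finset.card_pos.2 ⟨b x, hbxL⟩
    obtain ⟨N', hN'⟩ : ∃ N', L.card = N' + 1 := ⟨L.card - 1, by omega⟩
    have hsub : L.filter (· < b x) ⊆ L.erase (b x) := by
      intro z hz
      rw [Finset.mem_filter] at hz
      exact Finset.mem_erase.2 ⟨hz.2.ne, hz.1⟩
    have hcard : (L.filter (· < b x)).card ≤ N' := by
      have := Finset.card_le_card hsub
      rw [Finset.card_erase_of_mem hbxL] at this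
      omega
    have hstab : M d B b (N' + 1) (b x) = M d B b (L.card + 1) (b x) :=
      M_stab N' L.card (b x) (by omega) hcard
    have hgoal : M d B b (L.card + 1) (b x) = M d B b L.card (b x) := by
      rw [hN'] at hstab ⊢
      exact hstab.symm
    rw [compress, if_neg hbx, compress, if_neg hby]
    conv_rhs => rw [M]
    refine le_trans ?_ (Finset.le_sup hy)
    rw [if_pos rfl]
    refine le_trans ?_ le_sup_right
    refine le_trans ?_ (Finset.le_sup (f := fun z => M d B b L.card (b z) + d y)
      (Finset.mem_filter.2 ⟨hx, hlt, hxy⟩))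
    refine le_of_eq ?_
    show M d B b (L.card + 1) (b x) + d y = M d B b L.card (b x) + d y
    rw [hgoal]

end DAT
namespace DAT

variable {α : Type}

theorem list_iInf_cons {γ : Type*} (a : γ) (l : List γ) (f : γ → ℝ≥0∞) :
    (⨅ c ∈ (a :: l), f c) = f a ⊓ ⨅ c ∈ l, f c := by
  simp [List.mem_cons, iInf_or, iInf_inf_eq]

theorem list_iSup_cons {γ : Type*} (a : γ) (l : List γ) (f : γ → ℝ≥0∞) :
    (⨆ c ∈ (a :: l), f c) = f a ⊔ ⨆ c ∈ l, f c := by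
  simp [List.mem_cons, iSup_or, iSup_sup_eq]

theorem list_iInf_attained {γ : Type*} (l : List γ) (f : γ → ℝ≥0∞) :
    (⨅ c ∈ l, f c) = ⊤ ∨ ∃ c ∈ l, (⨅ c ∈ l, f c) = f c := by
  induction l with
  | nil => simp
  | cons a l ih =>
    rw [list_iInf_cons]
    rcases le_total (f a) (⨅ c ∈ l, f c) with h | h
    · exact Or.inr ⟨a, by simp, inf_eq_left.2 h⟩
    · rw [inf_eq_right.2 h]
      rcases ih with h1 | ⟨c, hc, h1⟩
      · exact Or.inl h1
      · exact Or.inr ⟨c, List.mem_cons_of_mem _ hc, h1⟩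

theorem list_iSup_attained {γ : Type*} (l : List γ) (f : γ → ℝ≥0∞) :
    (⨆ c ∈ l, f c) = 0 ∨ ∃ c ∈ l, (⨆ c ∈ l, f c) = f c := by
  induction l with
  | nil => simp
  | cons a l ih =>
    rw [list_iSup_cons]
    rcases le_total (f a) (⨆ c ∈ l, f c) with h | h
    · rw [sup_eq_right.2 h]
      rcases ih with h1 | ⟨c, hc, h1⟩
      · exact Or.inl h1
      · exact Or.inr ⟨c, List.mem_cons_of_mem _ hc, h1⟩
    · exact Or.inr ⟨a, by simp, sup_eq_left.2 h⟩

/-- The abstract compression lemma. -/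
theorem F_compress_le {d β β' : α → ℝ≥0∞} {T : DAT α} {B : Finset α}
    (hB : (↑B : Set α) = {a | IsBasDesc T a})
    (H1 : ∀ a, max (β' a) (d a) ≤ max (β a) (d a))
    (H2 : ∀ a, max (β a) (d a) = ⊤ → max (β' a) (d a) = ⊤)
    (H3 : ∀ a a', a ∈ B → a' ∈ B → max (β a) (d a) < ⊤ →
      max (β a) (d a) ≤ max (β a') (d a') - d a' →
      max (β' a) (d a) ≤ max (β' a') (d a') - d a') :
    ∀ v, Subnode v T → F d β' v ≤ F d β v := by
  have hmem : ∀ {a : α}, IsBasDesc T a → a ∈ B := by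
    intro a ha
    rw [← Finset.mem_coe, hB]
    exact ha
  refine strongInd ?_ ?_ ?_ ?_
  · intro a _
    rw [F_bas, F_bas]
    exact H1 a
  · intro cs ih hsub
    rw [F_or, F_or]
    exact iInf₂_mono fun c hc => ih c hc ((subnode_or hc).trans' hsub)
  · intro cs ih hsub
    rw [F_and, F_and]
    exact iSup₂_mono fun c hc => ih c hc ((subnode_and hc).trans' hsub)
  · intro cs ih hsub
    rw [F_sand, F_sand]
    by_cases hb' : SandBad d (F d β') cs
    · rw [if_pos hb']
      have hb : SandBad d (F d β) cs := by
        rcases hb' with ⟨c, hc, hct⟩ | ⟨i, h, a, a', h1, h2, h3, h4⟩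
        · exact Or.inl ⟨c, hc,
            top_le_iff.1 (hct ▸ ih c hc ((subnode_sand hc).trans' hsub))⟩
        · have haB : a ∈ B :=
            hmem (basDesc_of_subnode ((subnode_sand (cs.get_mem _)).trans' hsub) h1)
          have haB' : a' ∈ B :=
            hmem (basDesc_of_subnode ((subnode_sand (cs.get_mem _)).trans' hsub) h2)
          rw [F_bas] at h3 h4
          rw [F_bas] at h3
          have hfa : max (β a) (d a) < ⊤ := by
            rcases lt_or_ge (max (β a) (d a)) ⊤ with h | h
            · exact h
            · exact absurd (H2 a (top_le_iff.1 h)) (by intro hh; rw [hh] at h4; exact absurd h4 (lt_irrefl _))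
          refine Or.inr ⟨i, h, a, a', h1, h2, ?_, ?_⟩
          · rw [F_bas, F_bas]
            by_contra hcon
            exact absurd (H3 a a' haB haB' hfa (not_lt.1 hcon)) (not_le.2 h3)
          · rw [F_bas]; exact hfa
      rw [if_pos hb]
    · rw [if_neg hb']
      by_cases hb : SandBad d (F d β) cs
      · rw [if_pos hb]; exact le_top
      · rw [if_neg hb]
        split
        · exact le_rfl
        · next hne =>
          exact ih _ (List.getLast_mem hne) ((subnode_sand (List.getLast_mem hne)).trans' hsub)

/-- Values of the canonical assignment lie in the candidate set. -/
theorem F_mem {d β : α → ℝ≥0∞} {T : DAT α} {B : Finset α} {SS : Finset ℝ≥0∞}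
    (hB : (↑B : Set α) = {a | IsBasDesc T a})
    (h0 : (0 : ℝ≥0∞) ∈ SS) (hda : ∀ a ∈ B, d a ∈ SS)
    (hβ : ∀ a ∈ B, β a ∈ insert ⊤ SS) :
    ∀ v, Subnode v T → F d β v ∈ insert ⊤ SS := by
  have hmem : ∀ {a : α}, IsBasDesc T a → a ∈ B := by
    intro a ha
    rw [← Finset.mem_coe, hB]
    exact ha
  refine strongInd ?_ ?_ ?_ ?_
  · intro a hsub
    have haB : a ∈ B := hmem (basDesc_of_subnode hsub (.bas a))
    rw [F_bas]
    rcases max_choice (β a) (d a) with h | h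
    · rw [h]; exact hβ a haB
    · rw [h]; exact Finset.mem_insert_of_mem (hda a haB)
  · intro cs ih hsub
    rw [F_or]
    rcases list_iInf_attained cs (F d β) with h | ⟨c, hc, h⟩
    · rw [h]; exact Finset.mem_insert_self _ _
    · rw [h]; exact ih c hc ((subnode_or hc).trans' hsub)
  · intro cs ih hsub
    rw [F_and]
    rcases list_iSup_attained cs (F d β) with h | ⟨c, hc, h⟩
    · rw [h]; exact Finset.mem_insert_of_mem h0
    · rw [h]; exact ih c hc ((subnode_and hc).trans' hsub)
  · intro cs ih hsub
    rw [F_sand]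
    split
    · exact Finset.mem_insert_self _ _
    · split
      · exact Finset.mem_insert_of_mem h0
      · next hne =>
        exact ih _ (List.getLast_mem hne) ((subnode_sand (List.getLast_mem hne)).trans' hsub)

end DAT

/-- there is a minimizing time assignment whose values lie in
`[0, M-1] ∪ {∞}` where `M = 1 + Σ_a d_a`. -/
theorem stmt15 {α : Type} [DecidableEq α] (T : DAT α) (d : α → ℝ≥0∞)
    (hd : ∀ a, d a ≠ ⊤) (B : Finset α) (hB : (↑B : Set α) = {a | DAT.IsBasDesc T a}) :
    ∃ f : DAT α → ℝ≥0∞, DAT.IsTA d f T ∧ (∀ g, DAT.IsTA d g T → f T ≤ g T) ∧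
      ∀ v, DAT.Subnode v T →
        f v = ⊤ ∨ f v ≤ (1 + ∑ a ∈ B, d a) - 1 := by
  classical
  open DAT in
  set S : ℝ≥0∞ := ∑ a ∈ B, d a with hS
  have hbound : (1 + S) - 1 = S := ENNReal.add_sub_cancel_left ENNReal.one_ne_top
  set SS : Finset ℝ≥0∞ := B.powerset.image fun s => ∑ x ∈ s, d x with hSS
  have h0 : (0 : ℝ≥0∞) ∈ SS :=
    Finset.mem_image.2 ⟨∅, Finset.mem_powerset.2 (Finset.empty_subset _), by simp⟩
  have hda : ∀ a ∈ B, d a ∈ SS := fun a ha =>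
    Finset.mem_image.2 ⟨{a}, Finset.mem_powerset.2 (Finset.singleton_subset_iff.2 ha), by simp⟩
  have hSSle : ∀ x ∈ SS, x ≤ S := by
    intro x hx
    obtain ⟨s, hs, rfl⟩ := Finset.mem_image.1 hx
    exact Finset.sum_le_sum_of_subset (Finset.mem_powerset.1 hs)
  set A' : Finset ℝ≥0∞ := (insert ⊤ SS).filter
    (fun x => ∃ β : α → ℝ≥0∞, (∀ a ∈ B, β a ∈ insert ⊤ SS) ∧ F d β T = x) with hA'
  have hne : A'.Nonempty := by
    refine ⟨F d d T, Finset.mem_filter.2 ⟨?_, d, ?_, rfl⟩⟩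
    · exact F_mem hB h0 hda (fun a ha => Finset.mem_insert_of_mem (hda a ha)) T (Subnode.refl T)
    · exact fun a ha => Finset.mem_insert_of_mem (hda a ha)
  obtain ⟨hmem', β0, hβ0, hval⟩ := Finset.mem_filter.1 (A'.min'_mem hne)
  refine ⟨F d β0, isTA_F d β0 T, ?_, ?_⟩
  · intro g hg
    set βg : α → ℝ≥0∞ := fun a => g (.bas a) with hβg
    set b : α → ℝ≥0∞ := fun a => max (βg a) (d a) with hb
    have hdb : ∀ y, d y ≤ b y := fun y => le_max_right _ _
    set β' : α → ℝ≥0∞ := compress d B b with hβ'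
    have H1 : ∀ a, max (β' a) (d a) ≤ max (βg a) (d a) := fun a =>
      max_le (compress_le hdb a) (le_max_right _ _)
    have H2 : ∀ a, max (βg a) (d a) = ⊤ → max (β' a) (d a) = ⊤ := by
      intro a ha
      have h1 : β' a = ⊤ := compress_top (d := d) (B := B) ha
      simp [h1]
    have H3 : ∀ a a', a ∈ B → a' ∈ B → max (βg a) (d a) < ⊤ →
        max (βg a) (d a) ≤ max (βg a') (d a') - d a' →
        max (β' a) (d a) ≤ max (β' a') (d a') - d a' := by
      intro a a' haB haB' hfa hle
      by_cases h : b a' = ⊤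
      · have h1 : β' a' = ⊤ := compress_top (d := d) (B := B) h
        have h2 : max (β' a') (d a') - d a' = ⊤ :=
          ENNReal.sub_eq_top_iff.2 ⟨by simp [h1], hd a'⟩
        rw [h2]; exact le_top
      · have hadd : b a + d a' ≤ b a' :=
          ((ENNReal.cancel_of_ne (hd a')).le_tsub_iff_right (hdb a')).1 hle
        have hc := compress_add_le haB haB' h hadd
        rw [max_eq_left (le_compress haB), max_eq_left (le_compress haB')]
        exact (ENNReal.cancel_of_ne (hd a')).le_tsub_of_add_le_right hc
    have hchain1 : F d β' T ≤ F d βg T := F_compress_le hB H1 H2 H3 T (Subnode.refl T)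
    have hchain2 : F d βg T ≤ g T := F_le_of_isTA hg T (Subnode.refl T)
    have hmemA : F d β' T ∈ A' := Finset.mem_filter.2
      ⟨F_mem hB h0 hda (fun a ha => compress_mem ha) T (.refl T),
        β', fun a ha => compress_mem ha, rfl⟩
    calc F d β0 T = A'.min' hne := hval
      _ ≤ F d β' T := A'.min'_le _ hmemA
      _ ≤ F d βg T := hchain1
      _ ≤ g T := hchain2
  · intro v hv
    rcases Finset.mem_insert.1 (F_mem hB h0 hda hβ0 v hv) with h | h
    · exact Or.inl h
    · right; rw [hbound]; exact hSSle _ h
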